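/- Let d ≥ 1 be an integer, let r be a real number with 0 < |r| < 1, let s be a real number, and let m₁, m₂ be positive real numbers. Then there exist a unique pair of real constants (α, β) and a unique real polynomial F such that F''(z) = (1 + r z)^{d−1} (2 d s r + (α z + β)(1 + r z)) for all real z, F(−1) = F(1) = 0, F'(−1) = 2(1−r)^d / m₂, and F'(1) = −2(1+r)^d / m₁. Moreover, this polynomial F has degree at most d + 3. -/

import Mathlib

open Polynomial

/-- The boundary value problem characterizing the extremal polynomial of an
admissible Kähler class: the extremal ODE
`F''(z) = (1 + r z)^(d-1) (2 d s r + (α z + β)(1 + r z))`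
together with the endpoint conditions `F(±1) = 0`, `F'(-1) = 2(1-r)^d/m₂`,
`F'(1) = -2(1+r)^d/m₁`. -/
def ExtremalBVP (d : ℕ) (r s m₁ m₂ α β : ℝ) (F : Polynomial ℝ) : Prop :=
  (∀ z : ℝ, (derivative (derivative F)).eval z =
      (1 + r * z) ^ (d - 1) * (2 * (d : ℝ) * s * r + (α * z + β) * (1 + r * z))) ∧
  F.eval (-1) = 0 ∧ F.eval 1 = 0 ∧
  (derivative F).eval (-1) = 2 * (1 - r) ^ d / m₂ ∧
  (derivative F).eval 1 = -2 * (1 + r) ^ d / m₁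


noncomputable def pint (p : Polynomial ℝ) : Polynomial ℝ :=
  p.sum fun n a => C (a / (n + 1)) * X ^ (n + 1)

lemma pint_add (p q : Polynomial ℝ) : pint (p + q) = pint p + pint q := by
  unfold pint
  rw [Polynomial.sum_add_index] <;> intros <;> simp [add_div, add_mul]

lemma derivative_pint (p : Polynomial ℝ) : derivative (pint p) = p := by
  induction p using Polynomial.induction_on' with
  | add p q hp hq => rw [pint_add, derivative_add, hp, hq]
  | monomial n a =>
      unfold pint
      rw [Polynomial.sum_monomial_index _ _ (by simp)]
      have hne : ((n : ℝ) + 1) ≠ 0 := by positivity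
      rw [derivative_C_mul, derivative_X_pow]
      rw [← C_mul_X_pow_eq_monomial]
      push_cast
      rw [← mul_assoc, ← C_mul, div_mul_cancel₀ _ hne]

lemma natDegree_le_of_derivative_eq {p q : Polynomial ℝ} (h : derivative p = q) :
    p.natDegree ≤ q.natDegree + 1 := by
  rw [natDegree_le_iff_coeff_eq_zero]
  intro m hm
  have hm1 : q.natDegree < m - 1 := by omega
  have hc := Polynomial.coeff_derivative p (m - 1)
  rw [h, coeff_eq_zero_of_natDegree_lt hm1, show m - 1 + 1 = m by omega] at hc
  have hne : ((m - 1 : ℕ) : ℝ) + 1 ≠ 0 := by positivity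
  rcases mul_eq_zero.mp hc.symm with h' | h'
  · exact h'
  · exact absurd h' hne

lemma zero_bvp {d : ℕ} {r α β : ℝ} (hr1 : |r| < 1) {F : Polynomial ℝ}
    (hF : derivative (derivative F) = (C α * X + C β) * (1 + C r * X) ^ d)
    (h1 : F.eval (-1) = 0) (h2 : F.eval 1 = 0)
    (h3 : (derivative F).eval (-1) = 0) (h4 : (derivative F).eval 1 = 0) :
    α = 0 ∧ β = 0 ∧ F = 0 := by
  set Q : Polynomial ℝ := C α * X + C β with hQdef
  set P : Polynomial ℝ := Q * derivative F - C α * F with hPdef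
  have hQ' : derivative Q = C α := by simp [hQdef]
  have hdP : derivative P = Q ^ 2 * (1 + C r * X) ^ d := by
    rw [hPdef, derivative_sub, derivative_mul, derivative_mul, hQ', derivative_C, hF]
    ring
  have hpos : ∀ x ∈ Set.Icc (-1 : ℝ) 1, (0 : ℝ) < 1 + r * x := by
    intro x hx
    have hax : |x| ≤ 1 := abs_le.mpr ⟨hx.1, hx.2⟩
    have : |r * x| < 1 := by
      rw [abs_mul]
      calc |r| * |x| ≤ |r| * 1 := by gcongr
        _ < 1 := by simpa using hr1
    linarith [neg_lt_of_abs_lt this]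
  have hmono : MonotoneOn (fun x => P.eval x) (Set.Icc (-1 : ℝ) 1) := by
    apply monotoneOn_of_deriv_nonneg (convex_Icc _ _) P.continuous.continuousOn
      (fun x _ => P.differentiable.differentiableAt.differentiableWithinAt)
    intro x hx
    rw [interior_Icc] at hx
    rw [Polynomial.deriv, hdP]
    have h1x : (0 : ℝ) < 1 + r * x := hpos x (Set.mem_Icc_of_Ioo hx)
    simp only [eval_mul, eval_pow, eval_add, eval_one, eval_mul, eval_C, eval_X]
    exact mul_nonneg (sq_nonneg _) (pow_nonneg h1x.le d)
  have hPm1 : P.eval (-1) = 0 := by simp [hPdef, h1, h3]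
  have hP1 : P.eval 1 = 0 := by simp [hPdef, h2, h4]
  have hPzero : ∀ x ∈ Set.Icc (-1 : ℝ) 1, P.eval x = 0 := by
    intro x hx
    have hle : P.eval x ≤ 0 := hP1 ▸ hmono hx (Set.right_mem_Icc.mpr (by norm_num)) hx.2
    have hge : 0 ≤ P.eval x := hPm1 ▸ hmono (Set.left_mem_Icc.mpr (by norm_num)) hx hx.1
    linarith
  have hP0 : P = 0 := by
    apply Polynomial.eq_zero_of_infinite_isRoot
    exact (Set.Icc_infinite (show (-1:ℝ) < 1 by norm_num)).mono (fun x hx => hPzero x hx)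
  have hQW : Q ^ 2 * (1 + C r * X) ^ d = 0 := by rw [← hdP, hP0, derivative_zero]
  have hWne : ((1 : Polynomial ℝ) + C r * X) ^ d ≠ 0 := by
    apply pow_ne_zero
    intro h
    have := congrArg (Polynomial.eval 0) h
    simp at this
  have hQ0 : Q = 0 := by
    rcases mul_eq_zero.mp hQW with h | h
    · exact pow_eq_zero_iff (by norm_num) |>.mp h
    · exact absurd h hWne
  have hβ : β = 0 := by
    have := congrArg (Polynomial.eval 0) hQ0
    simpa [hQdef] using this
  have hα : α = 0 := by
    have := congrArg (Polynomial.eval 1) hQ0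
    simp [hQdef, hβ] at this
    exact this
  refine ⟨hα, hβ, ?_⟩
  have hF'' : derivative (derivative F) = 0 := by
    rw [hF, hQ0, zero_mul]
  have hF' : derivative F = C ((derivative F).coeff 0) := eq_C_of_derivative_eq_zero hF''
  have hc0 : (derivative F).coeff 0 = 0 := by
    have := h3; rw [hF'] at this; simpa using this
  rw [hc0] at hF'
  simp only [map_zero] at hF'
  have hFC : F = C (F.coeff 0) := eq_C_of_derivative_eq_zero hF'
  have hc1 : F.coeff 0 = 0 := by
    have := h2; rw [hFC] at this; simpa using this
  rw [hFC, hc1, map_zero]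

/-- The right-hand side of the extremal ODE, as a polynomial. -/
noncomputable def Gpoly (d : ℕ) (r s α β : ℝ) : Polynomial ℝ :=
  C (2 * d * s * r) * (1 + C r * X) ^ (d - 1) + (C α * X + C β) * (1 + C r * X) ^ d

lemma eval_Gpoly (d : ℕ) (hd : 1 ≤ d) (r s α β : ℝ) (z : ℝ) :
    (Gpoly d r s α β).eval z
      = (1 + r * z) ^ (d - 1) * (2 * (d : ℝ) * s * r + (α * z + β) * (1 + r * z)) := by
  obtain ⟨e, rfl⟩ : ∃ e, d = e + 1 := ⟨d - 1, by omega⟩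
  simp only [Gpoly, eval_add, eval_mul, eval_pow, eval_C, eval_X, eval_one,
    Nat.add_sub_cancel]
  push_cast
  ring

lemma ode_iff (d : ℕ) (hd : 1 ≤ d) (r s α β : ℝ) (F : Polynomial ℝ) :
    (∀ z : ℝ, (derivative (derivative F)).eval z =
        (1 + r * z) ^ (d - 1) * (2 * (d : ℝ) * s * r + (α * z + β) * (1 + r * z)))
      ↔ derivative (derivative F) = Gpoly d r s α β := by
  constructor
  · intro h
    exact Polynomial.funext fun z => by rw [h z, eval_Gpoly d hd]
  · intro h z
    rw [h, eval_Gpoly d hd]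

noncomputable def Hone (d : ℕ) (r : ℝ) : Polynomial ℝ :=
  pint (pint (X * (1 + C r * X) ^ d))

noncomputable def Htwo (d : ℕ) (r : ℝ) : Polynomial ℝ :=
  pint (pint ((1 + C r * X) ^ d))

noncomputable def Hzero (d : ℕ) (r s : ℝ) : Polynomial ℝ :=
  pint (pint (C (2 * d * s * r) * (1 + C r * X) ^ (d - 1)))

noncomputable def Fmap (d : ℕ) (r : ℝ) (v : ℝ × ℝ × ℝ × ℝ) : Polynomial ℝ :=
  C v.1 * Hone d r + C v.2.1 * Htwo d r + C v.2.2.1 * X + C v.2.2.2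

lemma Fmap_add (d : ℕ) (r : ℝ) (v w : ℝ × ℝ × ℝ × ℝ) :
    Fmap d r (v + w) = Fmap d r v + Fmap d r w := by
  simp only [Fmap, Prod.fst_add, Prod.snd_add, C_add]
  ring

lemma Fmap_smul (d : ℕ) (r : ℝ) (c : ℝ) (v : ℝ × ℝ × ℝ × ℝ) :
    Fmap d r (c • v) = C c * Fmap d r v := by
  simp only [Fmap, Prod.smul_fst, Prod.smul_snd, smul_eq_mul, C_mul]
  ring

lemma dd_Fmap (d : ℕ) (r : ℝ) (v : ℝ × ℝ × ℝ × ℝ) :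
    derivative (derivative (Fmap d r v)) = (C v.1 * X + C v.2.1) * (1 + C r * X) ^ d := by
  simp only [Fmap, Hone, Htwo, derivative_add, derivative_mul, derivative_C, derivative_X,
    derivative_pint, zero_mul, mul_one, mul_zero, add_zero, zero_add, derivative_one]
  ring

lemma dd_Hzero (d : ℕ) (r s : ℝ) :
    derivative (derivative (Hzero d r s)) = C (2 * d * s * r) * (1 + C r * X) ^ (d - 1) := by
  simp only [Hzero, derivative_pint]

noncomputable def Lmap (d : ℕ) (r : ℝ) : (ℝ × ℝ × ℝ × ℝ) →ₗ[ℝ] ℝ × ℝ × ℝ × ℝ where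
  toFun v := ((Fmap d r v).eval (-1), (Fmap d r v).eval 1,
    (derivative (Fmap d r v)).eval (-1), (derivative (Fmap d r v)).eval 1)
  map_add' v w := by
    simp only [Fmap_add, derivative_add, eval_add]
    rfl
  map_smul' c v := by
    simp only [Fmap_smul, derivative_C_mul, eval_mul, eval_C, RingHom.id_apply]
    rfl

lemma Lmap_apply (d : ℕ) (r : ℝ) (v : ℝ × ℝ × ℝ × ℝ) :
    Lmap d r v = ((Fmap d r v).eval (-1), (Fmap d r v).eval 1,
      (derivative (Fmap d r v)).eval (-1), (derivative (Fmap d r v)).eval 1) := rfl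

lemma natDegree_Gpoly_le (d : ℕ) (r s α β : ℝ) : (Gpoly d r s α β).natDegree ≤ d + 1 := by
  have hCX : (C r * X : Polynomial ℝ).natDegree ≤ 1 :=
    natDegree_mul_le.trans (by simp)
  have hW : ((1 : Polynomial ℝ) + C r * X).natDegree ≤ 1 :=
    (natDegree_add_le _ _).trans (by simp [hCX])
  have hWpow : ∀ n : ℕ, (((1 : Polynomial ℝ) + C r * X) ^ n).natDegree ≤ n := fun n =>
    natDegree_pow_le.trans (by calc n * ((1 : Polynomial ℝ) + C r * X).natDegree
        ≤ n * 1 := Nat.mul_le_mul_left _ hW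
      _ = n := Nat.mul_one n)
  have hQ : (C α * X + C β : Polynomial ℝ).natDegree ≤ 1 := by
    apply (natDegree_add_le _ _).trans
    simp [natDegree_mul_le.trans (show (C α : Polynomial ℝ).natDegree + X.natDegree ≤ 1 by simp)]
  apply (natDegree_add_le _ _).trans
  apply max_le
  · apply natDegree_mul_le.trans
    have := hWpow (d - 1)
    simp only [natDegree_C, zero_add]
    omega
  · apply natDegree_mul_le.trans
    have := hWpow d
    omega


/-- There exist a unique pair of constants `(α, β)` and a unique polynomial `F`
solving the extremal boundary value problem, and this `F` has degree at most `d + 3`. -/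
theorem extremal_polynomial_exists_unique (d : ℕ) (hd : 1 ≤ d) (r s m₁ m₂ : ℝ)
    (hr0 : 0 < |r|) (hr1 : |r| < 1) (hm₁ : 0 < m₁) (hm₂ : 0 < m₂) :
    (∃! x : ℝ × ℝ × Polynomial ℝ, ExtremalBVP d r s m₁ m₂ x.1 x.2.1 x.2.2) ∧
    (∀ (α β : ℝ) (F : Polynomial ℝ), ExtremalBVP d r s m₁ m₂ α β F →
      F.natDegree ≤ d + 3) := by
  have hinjL : Function.Injective (Lmap d r) := by
    rw [← LinearMap.ker_eq_bot, LinearMap.ker_eq_bot']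
    intro v hv
    obtain ⟨a, b, c, e⟩ := v
    simp only [Lmap_apply, Prod.mk_eq_zero] at hv
    obtain ⟨e1, e2, e3, e4⟩ := hv
    obtain ⟨hα, hβ, hF0⟩ := zero_bvp hr1 (dd_Fmap d r (a, b, c, e)) e1 e2 e3 e4
    simp only at hα hβ
    have h4 : e = 0 := by
      have := congrArg (Polynomial.eval 0) hF0
      simpa [Fmap, hα, hβ] using this
    have h3 : c = 0 := by
      have := congrArg (Polynomial.eval 1) hF0
      simp [Fmap, hα, hβ, h4] at this
      exact this
    simp [Prod.mk_eq_zero, hα, hβ, h3, h4]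
  have hsurj := LinearMap.injective_iff_surjective.mp hinjL
  obtain ⟨v, hv⟩ := hsurj (-(Hzero d r s).eval (-1), -(Hzero d r s).eval 1,
    2 * (1 - r) ^ d / m₂ - (derivative (Hzero d r s)).eval (-1),
    -2 * (1 + r) ^ d / m₁ - (derivative (Hzero d r s)).eval 1)
  rw [Lmap_apply, Prod.mk.injEq, Prod.mk.injEq, Prod.mk.injEq] at hv
  obtain ⟨e1, e2, e3, e4⟩ := hv
  set F₀ : Polynomial ℝ := Hzero d r s + Fmap d r v with hF₀def
  have hF₀'' : derivative (derivative F₀) = Gpoly d r s v.1 v.2.1 := by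
    have h : derivative (derivative F₀)
        = derivative (derivative (Hzero d r s)) + derivative (derivative (Fmap d r v)) := by
      rw [hF₀def, derivative_add, derivative_add]
    rw [h, dd_Hzero, dd_Fmap, Gpoly]
  have hsol : ExtremalBVP d r s m₁ m₂ v.1 v.2.1 F₀ := by
    refine ⟨(ode_iff d hd r s _ _ F₀).mpr hF₀'', ?_, ?_, ?_, ?_⟩
    · rw [hF₀def, eval_add, e1]; ring
    · rw [hF₀def, eval_add, e2]; ring
    · rw [hF₀def, derivative_add, eval_add, e3]; ring
    · rw [hF₀def, derivative_add, eval_add, e4]; ring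
  constructor
  · refine ⟨(v.1, v.2.1, F₀), hsol, ?_⟩
    rintro ⟨α, β, F⟩ ⟨hode, hb1, hb2, hb3, hb4⟩
    have hF'' := (ode_iff d hd r s α β F).mp hode
    have hD : derivative (derivative (F - F₀))
        = (C (α - v.1) * X + C (β - v.2.1)) * (1 + C r * X) ^ d := by
      rw [derivative_sub, derivative_sub, hF'', hF₀'', C_sub, C_sub, Gpoly, Gpoly]
      ring
    obtain ⟨hα, hβ, hFe⟩ := zero_bvp hr1 hD
      (by rw [eval_sub, hb1, hsol.2.1, sub_zero])
      (by rw [eval_sub, hb2, hsol.2.2.1, sub_zero])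
      (by rw [derivative_sub, eval_sub, hb3, hsol.2.2.2.1, sub_self])
      (by rw [derivative_sub, eval_sub, hb4, hsol.2.2.2.2, sub_self])
    have h1 : α = v.1 := by linarith [sub_eq_zero.mp hα]
    have h2 : β = v.2.1 := by linarith [sub_eq_zero.mp hβ]
    have h3 : F = F₀ := sub_eq_zero.mp hFe
    simp [Prod.ext_iff, h1, h2, h3]
  · intro α β F hF
    have hF'' := (ode_iff d hd r s α β F).mp hF.1
    have hdeg2 : (derivative (derivative F)).natDegree ≤ d + 1 :=
      hF'' ▸ natDegree_Gpoly_le d r s α β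
    have s1 : F.natDegree ≤ (derivative F).natDegree + 1 := natDegree_le_of_derivative_eq rfl
    have s2 : (derivative F).natDegree ≤ (derivative (derivative F)).natDegree + 1 :=
      natDegree_le_of_derivative_eq rfl
    omega
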